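/- The number of integer points x = (x_1, ..., x_n) ∈ ℕ^n satisfying x_1 + ... + x_k ≤ k for all 1 ≤ k ≤ n equals the Catalan number C_{n+1}. -/

import Mathlib

open Finset

private def psG : ℕ → ℕ → ℕ
  | 0, _ => 1
  | n+1, m => ∑ j ∈ Finset.range (m+1), psG n (m - j + 1)

private lemma psG_zero (m : ℕ) : psG 0 m = 1 := rfl

private lemma psG_succ (n m : ℕ) :
    psG (n+1) m = ∑ t ∈ Finset.range (m+1), psG n (t+1) := by
  show (∑ j ∈ Finset.range (m+1), psG n (m - j + 1)) = _
  rw [← Finset.sum_range_reflect (fun t => psG n (t+1)) (m+1)]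
  simp

private lemma psG_zero' (n : ℕ) : psG (n+1) 0 = psG n 1 := by
  simp [psG_succ]

private lemma catalan_succ_range (n : ℕ) :
    catalan (n + 1) = ∑ i ∈ Finset.range (n+1), catalan i * catalan (n - i) := by
  rw [catalan_succ, ← Fin.sum_univ_eq_sum_range]

private lemma psG_key (n : ℕ) : psG n 0 = catalan n ∧
    ∀ m, psG n (m+1) = ∑ j ∈ Finset.range (n+1), catalan j * psG (n-j) m := by
  induction n using Nat.strong_induction_on with
  | _ n ih =>
    match n with
    | 0 =>
      refine ⟨by simp [psG_zero], fun m => by simp [psG_zero]⟩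
    | n+1 =>
      have H2 : ∀ m, psG (n+1) (m+1) =
          ∑ j ∈ Finset.range (n+2), catalan j * psG (n+1-j) m := by
        intro m
        rw [psG_succ]
        have step1 : ∑ t ∈ Finset.range (m+2), psG n (t+1)
            = ∑ t ∈ Finset.range (m+2), ∑ j ∈ Finset.range (n+1),
                catalan j * psG (n-j) t := by
          exact Finset.sum_congr rfl fun t _ => (ih n (Nat.lt_succ_self n)).2 t
        rw [step1, Finset.sum_comm]
        have step2 : ∀ j ∈ Finset.range (n+1),
            ∑ t ∈ Finset.range (m+2), catalan j * psG (n-j) t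
            = catalan j * catalan (n-j) + catalan j * psG (n-j+1) m := by
          intro j hj
          simp only [Finset.mem_range] at hj
          rw [← Finset.mul_sum, Finset.sum_range_succ' (fun t => psG (n-j) t) (m+1)]
          rw [← psG_succ, (ih (n-j) (by omega)).1, mul_add, add_comm (catalan j * psG (n-j+1) m)]
        rw [Finset.sum_congr rfl step2, Finset.sum_add_distrib, ← catalan_succ_range]
        rw [Finset.sum_range_succ (fun j => catalan j * psG (n+1-j) m) (n+1)]
        have : ∑ j ∈ Finset.range (n+1), catalan j * psG (n-j+1) m
            = ∑ j ∈ Finset.range (n+1), catalan j * psG (n+1-j) m := by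
          apply Finset.sum_congr rfl
          intro j hj
          simp only [Finset.mem_range] at hj
          congr 2
          omega
        rw [this]
        simp [psG_zero]
        ring
      have H1 : psG (n+1) 0 = catalan (n+1) := by
        rw [psG_zero', (ih n (Nat.lt_succ_self n)).2 0]
        rw [catalan_succ_range]
        apply Finset.sum_congr rfl
        intro j hj
        simp only [Finset.mem_range] at hj
        rw [(ih (n-j) (by omega)).1]
      exact ⟨H1, H2⟩

private lemma psG_one (n : ℕ) : psG n 1 = catalan (n+1) := by
  cases n with
  | zero => simp [psG_zero, catalan_one]
  | succ n => rw [← psG_zero' (n+1)]; exact (psG_key (n+2)).1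

/-- The subtype of lattice points. -/
private def PS (n m : ℕ) : Type :=
  {x : Fin n → ℕ // ∀ k : Fin n, ∑ i ∈ Finset.Iic k, x i ≤ (k : ℕ) + m}

private lemma sum_Iic_zero {n : ℕ} (x : Fin (n+1) → ℕ) :
    ∑ i ∈ Finset.Iic (0 : Fin (n+1)), x i = x 0 := by
  have : (Finset.Iic (0 : Fin (n+1))) = {0} := by
    ext i
    simp [Fin.le_zero_iff]
  rw [this, Finset.sum_singleton]

private lemma sum_Iic_filter {n : ℕ} (x : Fin n → ℕ) (k : Fin n) :
    ∑ i ∈ Finset.Iic k, x i = ∑ i : Fin n, if i ≤ k then x i else 0 := by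
  rw [← Finset.sum_filter]
  congr 1
  ext i
  simp

private lemma sum_Iic_succ {n : ℕ} (x : Fin (n+1) → ℕ) (k : Fin n) :
    ∑ i ∈ Finset.Iic k.succ, x i = x 0 + ∑ i ∈ Finset.Iic k, x i.succ := by
  rw [sum_Iic_filter, sum_Iic_filter, Fin.sum_univ_succ]
  simp [Fin.succ_le_succ_iff]

private instance PS_finite (n m : ℕ) : Finite (PS n m) := by
  let f : PS n m → (Fin n → Fin (n + m + 1)) := fun x i =>
    ⟨x.1 i, by
      have h1 : x.1 i ≤ ∑ j ∈ Finset.Iic i, x.1 j :=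
        Finset.single_le_sum (fun j _ => Nat.zero_le _) (Finset.mem_Iic.mpr le_rfl)
      have h2 := x.2 i
      have h3 : (i : ℕ) < n := i.isLt
      omega⟩
  apply Finite.of_injective f
  intro a b hab
  apply Subtype.ext
  funext i
  exact congrArg Fin.val (congrFun hab i)

private lemma nat_card_sigma {ι : Type} [Fintype ι] (f : ι → Type) [∀ i, Finite (f i)] :
    Nat.card (Σ i, f i) = ∑ i, Nat.card (f i) := by
  haveI : ∀ i, Fintype (f i) := fun i => Fintype.ofFinite _
  simp [Nat.card_eq_fintype_card, Fintype.card_sigma]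

private def psHead {n m : ℕ} (x : PS (n+1) m) : Fin (m+1) :=
  ⟨x.1 0, by
    have h := x.2 0
    rw [sum_Iic_zero] at h
    simp only [Fin.val_zero] at h
    omega⟩

private def psFiberEquiv (n m : ℕ) (j : Fin (m+1)) :
    {x : PS (n+1) m // psHead x = j} ≃ PS n (m - (j : ℕ) + 1) where
  toFun x := ⟨fun i => x.1.1 i.succ, by
    intro k
    have h := x.1.2 k.succ
    rw [sum_Iic_succ] at h
    have h0 : x.1.1 0 = (j : ℕ) := congrArg Fin.val x.2
    have hj : (j : ℕ) < m + 1 := j.isLt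
    rw [Fin.val_succ] at h
    rw [h0] at h
    generalize hS : ∑ i ∈ Finset.Iic k, x.1.1 i.succ = S at h ⊢
    omega⟩
  invFun y := ⟨⟨Fin.cons (j : ℕ) y.1, by
      intro k
      refine Fin.cases ?_ ?_ k
      · rw [sum_Iic_zero]
        simp only [Fin.cons_zero, Fin.val_zero]
        have hj : (j : ℕ) < m + 1 := j.isLt
        omega
      · intro t
        rw [sum_Iic_succ]
        simp only [Fin.cons_zero, Fin.cons_succ, Fin.val_succ]
        have h := y.2 t
        have hj : (j : ℕ) < m + 1 := j.isLt
        generalize hS : ∑ i ∈ Finset.Iic t, y.1 i = S at h ⊢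
        omega⟩,
    by
      apply Fin.ext
      simp [psHead, Fin.cons_zero]⟩
  left_inv x := by
    apply Subtype.ext
    apply Subtype.ext
    have h0 : x.1.1 0 = (j : ℕ) := congrArg Fin.val x.2
    show Fin.cons ((j : ℕ)) (fun i => x.1.1 i.succ) = x.1.1
    rw [← h0]
    exact Fin.cons_self_tail x.1.1
  right_inv y := by
    apply Subtype.ext
    funext i
    exact Fin.cons_succ (α := fun _ => ℕ) ((j : ℕ)) y.1 i

private lemma card_PS (n : ℕ) : ∀ m, Nat.card (PS n m) = psG n m := by
  induction n with
  | zero =>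
    intro m
    haveI : Unique (PS 0 m) :=
      ⟨⟨⟨fun i => i.elim0, fun k => k.elim0⟩⟩, fun x => Subtype.ext (funext fun i => i.elim0)⟩
    rw [Nat.card_unique, psG_zero]
  | succ n ih =>
    intro m
    have e1 : Nat.card (PS (n+1) m)
        = Nat.card (Σ j : Fin (m+1), {x : PS (n+1) m // psHead x = j}) :=
      Nat.card_congr (Equiv.sigmaFiberEquiv (psHead (n := n) (m := m))).symm
    rw [e1, nat_card_sigma]
    have e2 : ∀ j : Fin (m+1),
        Nat.card {x : PS (n+1) m // psHead x = j} = psG n (m - (j : ℕ) + 1) := by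
      intro j
      rw [Nat.card_congr (psFiberEquiv n m j), ih]
    rw [Finset.sum_congr rfl (fun j _ => e2 j)]
    rw [Fin.sum_univ_eq_sum_range (fun j => psG n (m - j + 1)) (m+1)]
    rfl

theorem stmt_10 (n : ℕ) :
    Nat.card {x : Fin n → ℕ // ∀ k : Fin n, ∑ i ∈ Finset.Iic k, x i ≤ (k : ℕ) + 1}
      = catalan (n + 1) := by
  have h := card_PS n 1
  rw [psG_one] at h
  exact h
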